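/- Suppose for every $n' \le n$, any arrangement in which all crossings have degree at most $\sqrt{n'}$ admits a coloring with $C\sqrt{n'}$ colors avoiding monochromatic crossings of degree at least 4 (for some absolute constant $C$). Then every arrangement of $n$ pseudolines admits such a coloring with at most $C\sqrt{n} + 2\sqrt{n}$ colors: iteratively remove bundles of more than $\sqrt{n}$ pseudolines through a high-degree crossing (at most $\sqrt{n}$ iterations), color the remainder, and reinsert each bundle using 2 fresh colors per bundle. -/

import Mathlib

open Finset
open scoped Classical

/-- The number of pseudolines through a crossing. -/
noncomputable def Deg (L C : Type) [Fintype L] (Inc : C → L → Prop) (c : C) : ℕ :=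
  (Finset.univ.filter fun x => Inc c x).card

section Pad
variable {L C : Type}

abbrev PadL (L : Type) (S : Finset L) (m : ℕ) : Type := {l : L // l ∈ S} ⊕ Fin m

def padInc (Inc : C → L → Prop) (S : Finset L) (m : ℕ)
    (e : PadL L S m → ℕ) :
    (C ⊕ (PadL L S m × PadL L S m)) → PadL L S m → Prop
  | Sum.inl c, Sum.inl x => Inc c x.val
  | Sum.inl _, Sum.inr _ => False
  | Sum.inr (a, b), l => (l = a ∨ l = b) ∧ e a < e b ∧ (a.isRight = true ∨ b.isRight = true)

@[simp] lemma padInc_inl_inl (Inc : C → L → Prop) (S : Finset L) (m : ℕ)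
    (e : PadL L S m → ℕ) (c : C) (x : {l : L // l ∈ S}) :
    padInc Inc S m e (Sum.inl c) (Sum.inl x) ↔ Inc c x.val := Iff.rfl

@[simp] lemma padInc_inl_inr (Inc : C → L → Prop) (S : Finset L) (m : ℕ)
    (e : PadL L S m → ℕ) (c : C) (y : Fin m) :
    padInc Inc S m e (Sum.inl c) (Sum.inr y) ↔ False := Iff.rfl

@[simp] lemma padInc_inr (Inc : C → L → Prop) (S : Finset L) (m : ℕ)
    (e : PadL L S m → ℕ) (a b l : PadL L S m) :
    padInc Inc S m e (Sum.inr (a, b)) l ↔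
      (l = a ∨ l = b) ∧ e a < e b ∧ (a.isRight = true ∨ b.isRight = true) := Iff.rfl

end Pad

lemma two_le_sqrt {n : ℕ} (hn4 : 4 ≤ n) : (2 : ℝ) ≤ Real.sqrt n := by
  have : (2:ℝ) = Real.sqrt 4 := by
    rw [show (4:ℝ) = 2^2 by norm_num, Real.sqrt_sq (by norm_num)]
  rw [this]
  exact Real.sqrt_le_sqrt (by exact_mod_cast hn4)

lemma base_lemma (Cconst : ℝ) (n : ℕ) (L C : Type) [Fintype L] [Fintype C]
    (Inc : C → L → Prop) (hn4 : 4 ≤ n) (hn : Fintype.card L = n)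
    (hpair : ∀ l₁ l₂ : L, l₁ ≠ l₂ → ∃! c : C, Inc c l₁ ∧ Inc c l₂)
    (ih : ∀ (L' C' : Type) (iL' : Fintype L') (iC' : Fintype C') (Inc' : C' → L' → Prop),
        @Fintype.card L' iL' = n →
        (∀ l₁ l₂ : L', l₁ ≠ l₂ → ∃! c : C', Inc' c l₁ ∧ Inc' c l₂) →
        (∀ c : C', (@Deg L' C' iL' Inc' c : ℝ) ≤ Real.sqrt n) →
        ∃ (k' : ℕ) (col : L' → Fin k'), (k' : ℝ) ≤ Cconst * Real.sqrt n ∧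
          ∀ c : C', 4 ≤ @Deg L' C' iL' Inc' c →
            ∃ l₁ l₂, Inc' c l₁ ∧ Inc' c l₂ ∧ col l₁ ≠ col l₂)
    (S : Finset L)
    (hlow : ∀ c : C, ((S.filter (Inc c)).card : ℝ) ≤ Real.sqrt n) :
    ∃ (k : ℕ) (col : L → ℕ),
      (∀ l ∈ S, col l < k) ∧
      ((k : ℝ) ≤ Cconst * Real.sqrt n) ∧
      ∀ c : C, 4 ≤ (S.filter (Inc c)).card →
        ∃ l₁ l₂, l₁ ∈ S ∧ l₂ ∈ S ∧ Inc c l₁ ∧ Inc c l₂ ∧ col l₁ ≠ col l₂ := by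
  classical
  obtain ⟨l0⟩ : Nonempty L := Fintype.card_pos_iff.mp (by omega)
  set m := n - S.card with hm
  have hSn : S.card ≤ n := by rw [← hn]; exact card_le_univ S
  set e : PadL L S m → ℕ := fun l => ((Fintype.equivFin (PadL L S m)) l : ℕ) with he
  have einj : Function.Injective e := by
    intro a b h
    exact (Fintype.equivFin (PadL L S m)).injective (Fin.val_injective h)
  set Inc' := padInc Inc S m e with hInc'
  -- card
  have hcard : Fintype.card (PadL L S m) = n := by
    simp only [PadL, Fintype.card_sum, Fintype.card_coe, Fintype.card_fin]
    omega
  -- degree of old crossings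
  have keydeg : ∀ c : C,
      Deg (PadL L S m) (C ⊕ (PadL L S m × PadL L S m)) Inc' (Sum.inl c)
        = (S.filter (Inc c)).card := by
    intro c
    unfold Deg
    refine Finset.card_bij (fun l _ => Sum.elim (fun x => x.val) (fun _ => l0) l) ?_ ?_ ?_
    · rintro (x | y) hl
      · simp only [mem_filter, mem_univ, true_and, hInc', padInc_inl_inl] at hl
        exact mem_filter.mpr ⟨x.2, hl⟩
      · simp only [mem_filter, mem_univ, true_and, hInc', padInc_inl_inr] at hl
    · rintro (x | y) hx (x' | y') hx' hxy
      · exact congrArg Sum.inl (Subtype.ext hxy)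
      · simp only [mem_filter, mem_univ, true_and, hInc', padInc_inl_inr] at hx'
      · simp only [mem_filter, mem_univ, true_and, hInc', padInc_inl_inr] at hx
      · simp only [mem_filter, mem_univ, true_and, hInc', padInc_inl_inr] at hx
    · intro b hb
      rw [mem_filter] at hb
      refine ⟨Sum.inl ⟨b, hb.1⟩, ?_, rfl⟩
      simp only [mem_filter, mem_univ, true_and, hInc', padInc_inl_inl]
      exact hb.2
  -- pairs
  have hpair' : ∀ l₁ l₂ : PadL L S m, l₁ ≠ l₂ →
      ∃! c', Inc' c' l₁ ∧ Inc' c' l₂ := by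
    intro l₁ l₂ hne
    by_cases hr : l₁.isRight = true ∨ l₂.isRight = true
    · have hee : e l₁ ≠ e l₂ := fun h => hne (einj h)
      rcases lt_or_gt_of_ne hee with hlt | hlt
      · refine ⟨Sum.inr (l₁, l₂), ⟨⟨Or.inl rfl, hlt, hr⟩, ⟨Or.inr rfl, hlt, hr⟩⟩, ?_⟩
        rintro (c | ⟨a, b⟩) ⟨h1, h2⟩
        · rcases hr with hr | hr
          · obtain ⟨y, rfl⟩ := Sum.isRight_iff.mp hr
            exact absurd h1 (by simp [hInc'])
          · obtain ⟨y, rfl⟩ := Sum.isRight_iff.mp hr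
            exact absurd h2 (by simp [hInc'])
        · simp only [hInc', padInc_inr] at h1 h2
          rcases h1.1 with rfl | rfl <;> rcases h2.1 with h2' | h2'
          · exact absurd h2'.symm hne
          · rw [h2']
          · rcases h2' with rfl
            exact absurd h1.2.1 (lt_asymm hlt)
          · exact absurd h2'.symm hne
      · refine ⟨Sum.inr (l₂, l₁), ⟨⟨Or.inr rfl, hlt, hr.symm⟩, ⟨Or.inl rfl, hlt, hr.symm⟩⟩, ?_⟩
        rintro (c | ⟨a, b⟩) ⟨h1, h2⟩
        · rcases hr with hr | hr
          · obtain ⟨y, rfl⟩ := Sum.isRight_iff.mp hr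
            exact absurd h1 (by simp [hInc'])
          · obtain ⟨y, rfl⟩ := Sum.isRight_iff.mp hr
            exact absurd h2 (by simp [hInc'])
        · simp only [hInc', padInc_inr] at h1 h2
          rcases h2.1 with rfl | rfl <;> rcases h1.1 with h1' | h1'
          · exact absurd h1' hne
          · rw [h1']
          · rcases h1' with rfl
            exact absurd h2.2.1 (lt_asymm hlt)
          · exact absurd h1' hne
    · push_neg at hr
      rcases l₁ with x₁ | y₁
      · rcases l₂ with x₂ | y₂
        · have hvne : x₁.val ≠ x₂.val := fun h => hne (congrArg Sum.inl (Subtype.ext h))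
          obtain ⟨c, hc, hcu⟩ := hpair x₁.val x₂.val hvne
          refine ⟨Sum.inl c, ⟨hc.1, hc.2⟩, ?_⟩
          rintro (c₂ | ⟨a, b⟩) ⟨h1, h2⟩
          · exact congrArg Sum.inl (hcu c₂ ⟨h1, h2⟩)
          · simp only [hInc', padInc_inr] at h1 h2
            rcases h1.1 with rfl | rfl <;> rcases h2.1 with h2' | h2'
            · exact (hvne ((congrArg Subtype.val (Sum.inl_injective h2')).symm)).elim
            · rcases h2' with rfl
              rcases h1.2.2 with hbad | hbad <;> simp at hbad
            · rcases h2' with rfl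
              rcases h1.2.2 with hbad | hbad <;> simp at hbad
            · exact (hvne ((congrArg Subtype.val (Sum.inl_injective h2')).symm)).elim
        · simp at hr
      · simp at hr
  -- degrees
  have hdeg' : ∀ c', (Deg (PadL L S m) (C ⊕ (PadL L S m × PadL L S m)) Inc' c' : ℝ)
      ≤ Real.sqrt n := by
    rintro (c | ⟨a, b⟩)
    · rw [keydeg c]; exact hlow c
    · have hsub : (univ.filter fun l : PadL L S m => Inc' (Sum.inr (a, b)) l) ⊆ {a, b} := by
        intro l hl
        simp only [mem_filter, mem_univ, true_and, hInc', padInc_inr] at hl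
        rcases hl.1 with rfl | rfl
        · exact mem_insert_self _ _
        · exact mem_insert_of_mem (mem_singleton_self _)
      have h2 : Deg (PadL L S m) (C ⊕ (PadL L S m × PadL L S m)) Inc' (Sum.inr (a, b)) ≤ 2 := by
        unfold Deg
        refine (card_le_card hsub).trans ?_
        refine (card_insert_le _ _).trans ?_
        simp
      refine le_trans ?_ (two_le_sqrt hn4)
      exact_mod_cast h2
  obtain ⟨k', col', hk', hgood'⟩ :=
    ih (PadL L S m) (C ⊕ (PadL L S m × PadL L S m)) inferInstance inferInstance Inc'
      hcard hpair' hdeg'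
  refine ⟨k', fun l => if h : l ∈ S then (col' (Sum.inl ⟨l, h⟩)).val else 0, ?_, hk', ?_⟩
  · intro l hl
    simp only [hl, dif_pos]
    exact (col' (Sum.inl ⟨l, hl⟩)).isLt
  · intro c hc
    obtain ⟨l₁, l₂, hi₁, hi₂, hne⟩ := hgood' (Sum.inl c) (by rw [keydeg]; exact hc)
    rcases l₁ with x₁ | y₁
    · rcases l₂ with x₂ | y₂
      · refine ⟨x₁.val, x₂.val, x₁.2, x₂.2, hi₁, hi₂, ?_⟩
        simp only [x₁.2, x₂.2, dif_pos]
        intro h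
        simp only [Subtype.coe_eta] at h
        exact hne (Fin.val_injective h)
      · exact absurd hi₂ (by simp [hInc'])
    · exact absurd hi₁ (by simp [hInc'])

lemma aux_lemma (Cconst : ℝ) (n : ℕ) (L C : Type) [Fintype L] [Fintype C]
    (Inc : C → L → Prop) (hn4 : 4 ≤ n) (hn : Fintype.card L = n)
    (hpair : ∀ l₁ l₂ : L, l₁ ≠ l₂ → ∃! c : C, Inc c l₁ ∧ Inc c l₂)
    (ih : ∀ (L' C' : Type) (iL' : Fintype L') (iC' : Fintype C') (Inc' : C' → L' → Prop),
        @Fintype.card L' iL' = n →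
        (∀ l₁ l₂ : L', l₁ ≠ l₂ → ∃! c : C', Inc' c l₁ ∧ Inc' c l₂) →
        (∀ c : C', (@Deg L' C' iL' Inc' c : ℝ) ≤ Real.sqrt n) →
        ∃ (k' : ℕ) (col : L' → Fin k'), (k' : ℝ) ≤ Cconst * Real.sqrt n ∧
          ∀ c : C', 4 ≤ @Deg L' C' iL' Inc' c →
            ∃ l₁ l₂, Inc' c l₁ ∧ Inc' c l₂ ∧ col l₁ ≠ col l₂) :
    ∀ (m : ℕ) (S : Finset L), S.card ≤ m →
      ∃ (k : ℕ) (col : L → ℕ),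
        (∀ l ∈ S, col l < k) ∧
        ((k : ℝ) ≤ Cconst * Real.sqrt n + 2 * S.card / Real.sqrt n) ∧
        ∀ c : C, 4 ≤ (S.filter (Inc c)).card →
          ∃ l₁ l₂, l₁ ∈ S ∧ l₂ ∈ S ∧ Inc c l₁ ∧ Inc c l₂ ∧ col l₁ ≠ col l₂ := by
  have hsqrt2 : (2 : ℝ) ≤ Real.sqrt n := two_le_sqrt hn4
  have hpos : (0 : ℝ) < Real.sqrt n := lt_of_lt_of_le two_pos hsqrt2
  have hbase : ∀ S : Finset L,
      (∀ c : C, ((S.filter (Inc c)).card : ℝ) ≤ Real.sqrt n) →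
      ∃ (k : ℕ) (col : L → ℕ),
        (∀ l ∈ S, col l < k) ∧
        ((k : ℝ) ≤ Cconst * Real.sqrt n + 2 * S.card / Real.sqrt n) ∧
        ∀ c : C, 4 ≤ (S.filter (Inc c)).card →
          ∃ l₁ l₂, l₁ ∈ S ∧ l₂ ∈ S ∧ Inc c l₁ ∧ Inc c l₂ ∧ col l₁ ≠ col l₂ := by
    intro S hlow
    obtain ⟨k, col, h1, h2, h3⟩ := base_lemma Cconst n L C Inc hn4 hn hpair ih S hlow
    refine ⟨k, col, h1, ?_, h3⟩
    have : (0:ℝ) ≤ 2 * S.card / Real.sqrt n := by positivity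
    linarith
  intro m
  induction m with
  | zero =>
    intro S hS
    have hS0 : S = ∅ := card_eq_zero.mp (Nat.le_zero.mp hS)
    subst hS0
    refine hbase ∅ fun c => ?_
    simp only [filter_empty, card_empty, Nat.cast_zero]
    positivity
  | succ m IH =>
    intro S hS
    by_cases hhigh : ∃ c : C, Real.sqrt n < ((S.filter (Inc c)).card : ℝ)
    · obtain ⟨c, hc⟩ := hhigh
      set B := S.filter (Inc c) with hB
      have hBS : B ⊆ S := filter_subset _ _
      have hBcard : 2 ≤ B.card := by exact_mod_cast (hsqrt2.trans hc.le)
      have hBne : B.Nonempty := card_pos.mp (by omega)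
      obtain ⟨l₀, hl₀⟩ := hBne
      have hS' : (S \ B).card ≤ m := by
        have h1 : (S \ B).card = S.card - B.card := card_sdiff_of_subset hBS
        have h2 : B.card ≤ S.card := card_le_card hBS
        omega
      obtain ⟨k', col', hlt', hbd', hgood'⟩ := IH (S \ B) hS'
      refine ⟨k' + 2, fun l => if l = l₀ then k' + 1 else if l ∈ B then k' else col' l,
        ?_, ?_, ?_⟩
      · intro l hl
        by_cases h1 : l = l₀
        · simp [h1]
        by_cases h2 : l ∈ B
        · simp only [h1, if_false, h2, if_true]
          omega
        · simp only [h1, if_false, h2, if_true]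
          have := hlt' l (mem_sdiff.mpr ⟨hl, h2⟩)
          omega
      · -- cardinality bound
        have h2 : B.card ≤ S.card := card_le_card hBS
        have hcards : ((S \ B).card : ℝ) = (S.card : ℝ) - B.card := by
          rw [card_sdiff_of_subset hBS]
          push_cast [h2]
          ring
        rw [hcards] at hbd'
        have hfrac : (2:ℝ) ≤ 2 * (B.card : ℝ) / Real.sqrt n := by
          rw [mul_div_assoc]
          have : (1:ℝ) ≤ (B.card : ℝ) / Real.sqrt n := (one_le_div hpos).mpr hc.le
          linarith
        have heq : Cconst * Real.sqrt n + 2 * ((S.card : ℝ) - B.card) / Real.sqrt n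
            + 2 * (B.card : ℝ) / Real.sqrt n
            = Cconst * Real.sqrt n + 2 * (S.card : ℝ) / Real.sqrt n := by
          field_simp
          ring
        push_cast
        linarith
      · -- goodness
        intro c' hc'
        by_cases hcc : c' = c
        · subst hcc
          obtain ⟨l₁, hl₁, hl₁0⟩ := Finset.exists_mem_ne (by omega : 1 < B.card) l₀
          refine ⟨l₁, l₀, hBS hl₁, hBS hl₀, (mem_filter.mp hl₁).2, (mem_filter.mp hl₀).2, ?_⟩
          simp only [hl₁0, if_false, hl₁, if_true, if_pos rfl]
          omega
        · have hone : ∀ l₁ ∈ B, ∀ l₂ ∈ B, Inc c' l₁ → Inc c' l₂ → l₁ = l₂ := by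
            intro l₁ h₁ l₂ h₂ hi₁ hi₂
            by_contra hne
            obtain ⟨cu, _, hu⟩ := hpair l₁ l₂ hne
            have e1 := hu c ⟨(mem_filter.mp h₁).2, (mem_filter.mp h₂).2⟩
            have e2 := hu c' ⟨hi₁, hi₂⟩
            exact hcc (e2.trans e1.symm)
          by_cases hmix : ∃ l ∈ B, Inc c' l
          · obtain ⟨lb, hlb, hib⟩ := hmix
            have hsub : (S.filter (Inc c')) ∩ B ⊆ {lb} := by
              intro x hx
              rw [mem_inter, mem_filter] at hx
              exact mem_singleton.mpr (hone x hx.2 lb hlb hx.1.2 hib)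
            have hint : ((S.filter (Inc c')) ∩ B).card ≤ 1 := by
              refine (card_le_card hsub).trans ?_
              simp
            have hdne : ((S.filter (Inc c')) \ B).Nonempty := by
              rw [← card_pos]
              have := Finset.card_sdiff_add_card_inter (S.filter (Inc c')) B
              omega
            obtain ⟨l₂, hl₂⟩ := hdne
            rw [mem_sdiff, mem_filter] at hl₂
            have hl₂0 : l₂ ≠ l₀ := fun h => hl₂.2 (h ▸ hl₀)
            refine ⟨lb, l₂, hBS hlb, hl₂.1.1, hib, hl₂.1.2, ?_⟩
            have hcl₂ := hlt' l₂ (mem_sdiff.mpr ⟨hl₂.1.1, hl₂.2⟩)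
            by_cases hbl : lb = l₀ <;>
              simp only [hbl, if_true, if_false, hlb, hl₂.2, hl₂0] <;> omega
          · push_neg at hmix
            have hfe : (S \ B).filter (Inc c') = S.filter (Inc c') := by
              ext x
              rw [mem_filter, mem_filter, mem_sdiff]
              constructor
              · rintro ⟨⟨hx1, _⟩, hx2⟩; exact ⟨hx1, hx2⟩
              · rintro ⟨hx1, hx2⟩
                exact ⟨⟨hx1, fun hxB => hmix x hxB hx2⟩, hx2⟩
            obtain ⟨l₁, l₂, hm₁, hm₂, hi₁, hi₂, hne⟩ := hgood' c' (by rw [hfe]; exact hc')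
            rw [mem_sdiff] at hm₁ hm₂
            have h10 : l₁ ≠ l₀ := fun h => hm₁.2 (h ▸ hl₀)
            have h20 : l₂ ≠ l₀ := fun h => hm₂.2 (h ▸ hl₀)
            refine ⟨l₁, l₂, hm₁.1, hm₂.1, hi₁, hi₂, ?_⟩
            simp only [h10, h20, hm₁.2, hm₂.2, if_false]
            exact hne
    · push_neg at hhigh
      exact hbase S hhigh


/-- Reduction: if every arrangement on at most `n` pseudolines whose crossings all have degree
at most `√n'` can be colored with `C·√n'` colors avoiding monochromatic crossings of degree at
least 4, then every arrangement of `n` pseudolines admits such a coloring with at most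
`C·√n + 2·√n` colors. -/
theorem stmt_19 (Cconst : ℝ) (n : ℕ) (L C : Type) [Fintype L] [Fintype C]
    (Inc : C → L → Prop) (hn : Fintype.card L = n)
    (hpair : ∀ l₁ l₂ : L, l₁ ≠ l₂ → ∃! c : C, Inc c l₁ ∧ Inc c l₂)
    (ih : ∀ n' : ℕ, n' ≤ n →
      ∀ (L' C' : Type) (iL' : Fintype L') (iC' : Fintype C') (Inc' : C' → L' → Prop),
        @Fintype.card L' iL' = n' →
        (∀ l₁ l₂ : L', l₁ ≠ l₂ → ∃! c : C', Inc' c l₁ ∧ Inc' c l₂) →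
        (∀ c : C', (@Deg L' C' iL' Inc' c : ℝ) ≤ Real.sqrt n') →
        ∃ (k' : ℕ) (col : L' → Fin k'), (k' : ℝ) ≤ Cconst * Real.sqrt n' ∧
          ∀ c : C', 4 ≤ @Deg L' C' iL' Inc' c →
            ∃ l₁ l₂, Inc' c l₁ ∧ Inc' c l₂ ∧ col l₁ ≠ col l₂) :
    ∃ (kc : ℕ) (col : L → Fin kc), (kc : ℝ) ≤ Cconst * Real.sqrt n + 2 * Real.sqrt n ∧
      ∀ c : C, 4 ≤ Deg L C Inc c →
        ∃ l₁ l₂, Inc c l₁ ∧ Inc c l₂ ∧ col l₁ ≠ col l₂ := by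
  classical
  have hdegle : ∀ c : C, Deg L C Inc c ≤ n := fun c => by
    unfold Deg
    rw [← hn]
    exact (card_le_card (subset_univ _)).trans_eq (Finset.card_univ)
  rcases Nat.eq_zero_or_pos n with hn0 | hn1
  · -- n = 0
    subst hn0
    have : IsEmpty L := Fintype.card_eq_zero_iff.mp hn
    refine ⟨0, fun l => isEmptyElim l, by simp, fun c hc => ?_⟩
    have := hdegle c
    omega
  rcases lt_or_ge n 4 with hn3 | hn4
  · -- 1 ≤ n ≤ 3 : every crossing has degree < 4
    -- derive Cconst ≥ 1
    have hC1 : (1 : ℝ) ≤ Cconst := by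
      obtain ⟨k', col', hk', _⟩ :=
        ih 1 hn1 (Fin 1) Empty inferInstance inferInstance (fun _ _ => False)
          (by simp)
          (fun l₁ l₂ h => absurd (Subsingleton.elim l₁ l₂) h)
          (fun c => c.elim)
      have hk1 : 1 ≤ k' := by
        rcases Nat.eq_zero_or_pos k' with h | h
        · subst h; exact (col' 0).elim0
        · exact h
      have : (1:ℝ) ≤ (k' : ℝ) := by exact_mod_cast hk1
      rw [Nat.cast_one, Real.sqrt_one, mul_one] at hk'
      linarith
    have hs1 : (1:ℝ) ≤ Real.sqrt n := by
      rw [show (1:ℝ) = Real.sqrt 1 by rw [Real.sqrt_one]]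
      exact Real.sqrt_le_sqrt (by exact_mod_cast hn1)
    refine ⟨1, fun _ => 0, ?_, fun c hc => ?_⟩
    · push_cast
      nlinarith [hC1, hs1]
    · have := hdegle c
      omega
  · -- main case n ≥ 4
    obtain ⟨k, col, hlt, hbd, hgood⟩ :=
      aux_lemma Cconst n L C Inc hn4 hn hpair (ih n le_rfl) n Finset.univ
        (le_of_eq (by rw [Finset.card_univ, hn]))
    refine ⟨k, fun l => ⟨col l, hlt l (mem_univ l)⟩, ?_, ?_⟩
    · have hpos : (0:ℝ) < Real.sqrt n := lt_of_lt_of_le two_pos (two_le_sqrt hn4)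
      have hcardu : ((Finset.univ : Finset L).card : ℝ) = (n : ℝ) := by
        rw [Finset.card_univ, hn]
      rw [hcardu] at hbd
      have hdiv : 2 * (n : ℝ) / Real.sqrt n = 2 * Real.sqrt n := by
        rw [mul_div_assoc, Real.div_sqrt]
      linarith [hbd, hdiv ▸ hbd]
    · intro c hc
      have hc' : 4 ≤ ((Finset.univ : Finset L).filter (Inc c)).card := hc
      obtain ⟨l₁, l₂, _, _, hi₁, hi₂, hne⟩ := hgood c hc'
      exact ⟨l₁, l₂, hi₁, hi₂, by simpa [Fin.ext_iff] using hne⟩
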